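/- Let Γ be a Conway 99-graph, let g be an automorphism of Γ of order 14 with unique fixed vertex x, and let O be an orbit of the cyclic group ⟨g⟩ contained in Γ₂(x) with |O| = 14, such that every vertex of O has exactly 4 neighbors inside O. Then the induced subgraph of Γ on O contains no triangle (no three mutually adjacent vertices of O). -/

import Mathlib

open Finset

/-- Let `g` be an order-14 automorphism of a Conway 99-graph with unique fixed
vertex `x`, and let `O` be an orbit of `⟨g⟩` contained in `Γ₂(x)` of size 14 in
which every vertex has exactly 4 neighbors inside `O`. Then the induced subgraph
on `O` contains no triangle. -/
theorem stmt_8 {V : Type*} [Fintype V] (G : SimpleGraph V) [DecidableRel G.Adj]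
    (h : G.IsSRGWith 99 14 1 2)
    (g : G ≃g G) (hg : orderOf g = 14) (x : V) (hx : ∀ v : V, g v = v ↔ v = x)
    (O : Set V) (hO : ∃ v : V, O = {w : V | ∃ n : ℤ, (g ^ n) v = w})
    (hOsub : O ⊆ {v : V | v ≠ x ∧ ¬G.Adj x v}) (hOcard : O.ncard = 14)
    (h4 : ∀ v ∈ O, Set.ncard {w ∈ O | G.Adj v w} = 4) :
    ¬∃ a b c : V, a ∈ O ∧ b ∈ O ∧ c ∈ O ∧ G.Adj a b ∧ G.Adj a c ∧ G.Adj b c := by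
  classical
  rintro ⟨a₀, b₀, c₀, ha₀, hb₀, hc₀, hab, hac, hbc⟩
  obtain ⟨v, hv⟩ := hO
  letI : LinearOrder V := LinearOrder.lift' (Fintype.equivFin V) (Fintype.equivFin V).injective
  set P : V → Finset (V × V) := fun a =>
    univ.filter (fun p => p.1 ∈ O ∧ p.2 ∈ O ∧ G.Adj a p.1 ∧ G.Adj a p.2 ∧ G.Adj p.1 p.2)
    with hP
  set S : Finset (V × V × V) :=
    univ.filter (fun t => t.1 ∈ O ∧ t.2.1 ∈ O ∧ t.2.2 ∈ O ∧
      G.Adj t.1 t.2.1 ∧ G.Adj t.1 t.2.2 ∧ G.Adj t.2.1 t.2.2) with hS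
  set Of : Finset V := O.toFinset with hOf
  have hmemOf : ∀ w, w ∈ Of ↔ w ∈ O := fun w => Set.mem_toFinset
  have hOfcard : Of.card = 14 := by rw [← Set.ncard_eq_toFinset_card']; exact hOcard
  -- group action facts
  have hzz : ∀ (k m : ℤ) (w : V), (g ^ k) ((g ^ m) w) = (g ^ (k + m)) w := by
    intro k m w; rw [zpow_add]; exact (RelIso.mul_apply _ _ _).symm
  have hcanc : ∀ (k : ℤ) (w : V), (g ^ k) ((g ^ (-k)) w) = w := by
    intro k w; rw [hzz, add_neg_cancel, zpow_zero]; rfl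
  have hcanc' : ∀ (k : ℤ) (w : V), (g ^ (-k)) ((g ^ k) w) = w := by
    intro k w; rw [hzz, neg_add_cancel, zpow_zero]; rfl
  have htrans : ∀ a ∈ O, ∀ b ∈ O, ∃ k : ℤ, (g ^ k) a = b := by
    intro a ha b hb
    rw [hv] at ha hb
    obtain ⟨m, hm⟩ := ha; obtain ⟨n, hn⟩ := hb
    exact ⟨n - m, by rw [← hm, hzz, sub_add_cancel, hn]⟩
  have hOinv : ∀ (k : ℤ), ∀ w ∈ O, (g ^ k) w ∈ O := by
    intro k w hw
    rw [hv] at hw ⊢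
    obtain ⟨m, hm⟩ := hw
    exact ⟨k + m, by rw [← hm, hzz]⟩
  have hadjk : ∀ (k : ℤ) (a b : V), G.Adj ((g ^ k) a) ((g ^ k) b) ↔ G.Adj a b :=
    fun k a b => (g ^ k).map_rel_iff
  -- λ = 1 : unique common neighbor
  have huniq : ∀ a w u u' : V, G.Adj a w → G.Adj a u → G.Adj w u → G.Adj a u' → G.Adj w u' →
      u = u' := by
    intro a w u u' haw hau hwu hau' hwu'
    have h1 := h.of_adj a w haw
    have hsub : Subsingleton (G.commonNeighbors a w) :=
      Fintype.card_le_one_iff_subsingleton.mp (le_of_eq h1)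
    have hu : u ∈ G.commonNeighbors a w := (SimpleGraph.mem_commonNeighbors G).mpr ⟨hau, hwu⟩
    have hu' : u' ∈ G.commonNeighbors a w := (SimpleGraph.mem_commonNeighbors G).mpr ⟨hau', hwu'⟩
    exact Subtype.ext_iff.mp (hsub.elim ⟨u, hu⟩ ⟨u', hu'⟩)
  -- each vertex of O has exactly 4 O-neighbors (finset form)
  have hNf : ∀ a ∈ O, (univ.filter (fun w => w ∈ O ∧ G.Adj a w) : Finset V).card = 4 := by
    intro a ha
    have := h4 a ha
    rwa [Set.ncard_eq_toFinset_card', Set.toFinset_setOf] at this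
  -- bound on P
  have hPle : ∀ a ∈ O, (P a).card ≤ 4 := by
    intro a ha
    rw [← hNf a ha]
    apply Finset.card_le_card_of_injOn (fun p => p.1)
    · intro p hp
      simp only [hP, mem_filter, mem_univ, true_and, mem_coe] at hp ⊢
      exact ⟨hp.1, hp.2.2.1⟩
    · intro p hp q hq hpq
      simp only [hP, mem_coe, mem_filter, mem_univ, true_and] at hp hq
      simp only at hpq
      have h2 : G.Adj p.1 q.2 := by rw [hpq]; exact hq.2.2.2.2
      have h1 : G.Adj a q.2 := hq.2.2.2.1
      exact Prod.ext_iff.mpr ⟨hpq,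
        huniq a p.1 p.2 q.2 hp.2.2.1 hp.2.2.2.1 hp.2.2.2.2 h1 h2⟩
  -- evenness of P
  have hPeven : ∀ a, Even (P a).card := by
    intro a
    have hsplit := Finset.card_filter_add_card_filter_not
      (s := P a) (p := fun p : V × V => p.1 < p.2)
    have hbij : ((P a).filter (fun p => p.1 < p.2)).card
        = ((P a).filter (fun p => ¬ p.1 < p.2)).card := by
      refine Finset.card_bij' (fun p _ => (p.2, p.1)) (fun p _ => (p.2, p.1)) ?hi ?hj ?li ?ri
      case hi =>
        intro p hp
        simp only [hP, mem_filter, mem_univ, true_and] at hp ⊢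
        exact ⟨⟨hp.1.2.1, hp.1.1, hp.1.2.2.2.1, hp.1.2.2.1, hp.1.2.2.2.2.symm⟩,
          not_lt.mpr (le_of_lt hp.2)⟩
      case hj =>
        intro p hp
        simp only [hP, mem_filter, mem_univ, true_and] at hp ⊢
        have hne : p.1 ≠ p.2 := hp.1.2.2.2.2.ne
        exact ⟨⟨hp.1.2.1, hp.1.1, hp.1.2.2.2.1, hp.1.2.2.1, hp.1.2.2.2.2.symm⟩,
          lt_of_le_of_ne (not_lt.mp hp.2) (Ne.symm hne)⟩
      case li => intro p _; rfl
      case ri => intro p _; rfl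
    obtain ⟨w, hw⟩ : ∃ w, ((P a).filter (fun p => p.1 < p.2)).card = w := ⟨_, rfl⟩
    exact ⟨w, by omega⟩
  -- constancy of P along the orbit
  have hPconst : ∀ a ∈ O, ∀ b ∈ O, (P a).card = (P b).card := by
    intro a ha b hb
    obtain ⟨k, hk⟩ := htrans a ha b hb
    refine Finset.card_bij' (fun p _ => ((g ^ k) p.1, (g ^ k) p.2))
      (fun p _ => ((g ^ (-k)) p.1, (g ^ (-k)) p.2)) ?hi ?hj ?li ?ri
    case hi =>
      intro p hp
      simp only [hP, mem_filter, mem_univ, true_and] at hp ⊢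
      refine ⟨hOinv k _ hp.1, hOinv k _ hp.2.1, ?_, ?_, (hadjk k _ _).mpr hp.2.2.2.2⟩
      · rw [← hk]; exact (hadjk k _ _).mpr hp.2.2.1
      · rw [← hk]; exact (hadjk k _ _).mpr hp.2.2.2.1
    case hj =>
      intro p hp
      simp only [hP, mem_filter, mem_univ, true_and] at hp ⊢
      refine ⟨hOinv (-k) _ hp.1, hOinv (-k) _ hp.2.1, ?_, ?_, (hadjk (-k) _ _).mpr hp.2.2.2.2⟩
      · have := (hadjk (-k) b p.1).mpr hp.2.2.1
        rwa [← hk, hcanc'] at this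
      · have := (hadjk (-k) b p.2).mpr hp.2.2.2.1
        rwa [← hk, hcanc'] at this
    case li =>
      intro p _
      exact Prod.ext_iff.mpr ⟨hcanc' k _, hcanc' k _⟩
    case ri =>
      intro p _
      exact Prod.ext_iff.mpr ⟨hcanc k _, hcanc k _⟩
  -- counting triples fiberwise
  have hsum : S.card = ∑ a ∈ Of, (P a).card := by
    rw [Finset.card_eq_sum_card_fiberwise (f := fun t : V × V × V => t.1) (t := Of)
      (fun t ht => by
        simp only [hS, mem_coe, mem_filter, mem_univ, true_and] at ht
        exact (hmemOf _).mpr ht.1)]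
    apply Finset.sum_congr rfl
    intro a haOf
    refine Finset.card_bij' (fun t _ => t.2) (fun p _ => (a, p)) ?hi ?hj ?li ?ri
    case hi =>
      intro t ht
      simp only [hS, hP, mem_filter, mem_univ, true_and] at ht ⊢
      obtain ⟨⟨h1, h2, h3, h4', h5, h6⟩, h7⟩ := ht
      subst h7
      exact ⟨h2, h3, h4', h5, h6⟩
    case hj =>
      intro p hp
      rw [mem_filter]
      refine ⟨?_, rfl⟩
      simp only [hS, hP, mem_filter, mem_univ, true_and] at hp ⊢
      exact ⟨(hmemOf a).mp haOf, hp.1, hp.2.1, hp.2.2.1, hp.2.2.2.1, hp.2.2.2.2⟩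
    case li =>
      intro t ht
      simp only [mem_filter] at ht
      exact Prod.ext_iff.mpr ⟨ht.2.symm, rfl⟩
    case ri => intro p _; rfl
  set c := (P a₀).card with hc
  have hsum2 : S.card = 14 * c := by
    rw [hsum, Finset.sum_congr rfl (fun a haOf => hPconst a ((hmemOf a).mp haOf) a₀ ha₀),
      Finset.sum_const, hOfcard, smul_eq_mul]
  have hc2 : 2 ≤ c := by
    have h1 : (b₀, c₀) ∈ P a₀ := by
      simp only [hP, mem_filter, mem_univ, true_and]
      exact ⟨hb₀, hc₀, hab, hac, hbc⟩
    have h2 : (c₀, b₀) ∈ P a₀ := by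
      simp only [hP, mem_filter, mem_univ, true_and]
      exact ⟨hc₀, hb₀, hac, hab, hbc.symm⟩
    have := Finset.one_lt_card.mpr ⟨_, h1, _, h2, fun hh => hbc.ne (congrArg Prod.fst hh)⟩
    omega
  -- 3 ∣ S.card via rotation
  have hrotmem : ∀ t ∈ S, (t.2.1, t.2.2, t.1) ∈ S := by
    intro t ht
    simp only [hS, mem_filter, mem_univ, true_and] at ht ⊢
    exact ⟨ht.2.1, ht.2.2.1, ht.1, ht.2.2.2.2.2, ht.2.2.2.1.symm, ht.2.2.2.2.1.symm⟩
  have hdist : ∀ t ∈ S, t.1 ≠ t.2.1 ∧ t.1 ≠ t.2.2 ∧ t.2.1 ≠ t.2.2 := by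
    intro t ht
    simp only [hS, mem_filter, mem_univ, true_and] at ht
    exact ⟨ht.2.2.2.1.ne, ht.2.2.2.2.1.ne, ht.2.2.2.2.2.ne⟩
  set p1 : V × V × V → Prop := fun t => t.1 < t.2.1 ∧ t.1 < t.2.2 with hp1
  set p2 : V × V × V → Prop := fun t => t.2.1 < t.2.2 ∧ t.2.1 < t.1 with hp2
  set p3 : V × V × V → Prop := fun t => t.2.2 < t.1 ∧ t.2.2 < t.2.1 with hp3
  have d13 : Disjoint (S.filter p1) (S.filter p3) := by
    rw [Finset.disjoint_left]
    intro t ht ht'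
    rw [mem_filter] at ht ht'
    exact absurd (lt_trans ht.2.2 ht'.2.1) (lt_irrefl _)
  have d23 : Disjoint (S.filter p2) (S.filter p3) := by
    rw [Finset.disjoint_left]
    intro t ht ht'
    rw [mem_filter] at ht ht'
    exact absurd (lt_trans ht.2.1 ht'.2.2) (lt_irrefl _)
  have d12 : Disjoint (S.filter p1) (S.filter p2) := by
    rw [Finset.disjoint_left]
    intro t ht ht'
    rw [mem_filter] at ht ht'
    exact absurd (lt_trans ht.2.1 ht'.2.2) (lt_irrefl _)
  have hcover : S.card = (S.filter p1).card + (S.filter p2).card + (S.filter p3).card := by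
    rw [← Finset.card_union_of_disjoint d12, ← Finset.card_union_of_disjoint
      (Finset.disjoint_union_left.mpr ⟨d13, d23⟩)]
    congr 1
    ext t
    simp only [mem_union, mem_filter]
    constructor
    · intro ht
      obtain ⟨d1, d2, d3⟩ := hdist t ht
      rcases lt_trichotomy t.1 t.2.1 with h12 | h12 | h12
      · rcases lt_trichotomy t.1 t.2.2 with h13 | h13 | h13
        · exact Or.inl (Or.inl ⟨ht, h12, h13⟩)
        · exact absurd h13 d2
        · exact Or.inr ⟨ht, h13, lt_trans h13 h12⟩
      · exact absurd h12 d1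
      · rcases lt_trichotomy t.2.1 t.2.2 with h23 | h23 | h23
        · exact Or.inl (Or.inr ⟨ht, h23, h12⟩)
        · exact absurd h23 d3
        · exact Or.inr ⟨ht, lt_trans h23 h12, h23⟩
    · rintro ((⟨ht, _⟩ | ⟨ht, _⟩) | ⟨ht, _⟩) <;> exact ht
  have hrot13 : (S.filter p1).card = (S.filter p3).card := by
    refine Finset.card_bij' (fun t _ => (t.2.1, t.2.2, t.1)) (fun t _ => (t.2.2, t.1, t.2.1))
      ?hi ?hj ?li ?ri
    case hi =>
      intro t ht
      rw [mem_filter] at ht ⊢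
      exact ⟨hrotmem t ht.1, ht.2.1, ht.2.2⟩
    case hj =>
      intro t ht
      rw [mem_filter] at ht ⊢
      exact ⟨hrotmem _ (hrotmem t ht.1), ht.2.1, ht.2.2⟩
    case li => intro t _; rfl
    case ri => intro t _; rfl
  have hrot32 : (S.filter p3).card = (S.filter p2).card := by
    refine Finset.card_bij' (fun t _ => (t.2.1, t.2.2, t.1)) (fun t _ => (t.2.2, t.1, t.2.1))
      ?hi ?hj ?li ?ri
    case hi =>
      intro t ht
      rw [mem_filter] at ht ⊢
      exact ⟨hrotmem t ht.1, ht.2.1, ht.2.2⟩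
    case hj =>
      intro t ht
      rw [mem_filter] at ht ⊢
      exact ⟨hrotmem _ (hrotmem t ht.1), ht.2.1, ht.2.2⟩
    case li => intro t _; rfl
    case ri => intro t _; rfl
  have h3dvd : 3 ∣ S.card := by
    rw [hcover, hrot13, hrot32]
    exact ⟨(S.filter p2).card, by ring⟩
  have hc4 := hPle a₀ ha₀
  obtain ⟨r, hr⟩ := hPeven a₀
  rw [hsum2] at h3dvd
  omega
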